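/- arXiv:2505.20602 — 4 statements merged into one kernel-verified Lean document; each statement's English description precedes it below -/
import Mathlib

section
/- Let α_1, …, α_n be nonzero reals, and let B = Σ_{j=1}^n α_j 𝟙_n^j (𝟙_n^j)^T, where 𝟙_n^j ∈ R^n has first j entries equal to 1 and the rest 0. Then B is invertible and its inverse is the symmetric tridiagonal matrix C(α_1,…,α_n) with diagonal entries (α_1^{-1}, α_1^{-1}+α_2^{-1}, …, α_{n-1}^{-1}+α_n^{-1}) and off-diagonal entries (C)_{i,i+1} = (C)_{i+1,i} = −α_i^{-1}. -/
open Matrix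

/-- Collapse a sum over `k` with condition `k+1 = j`. -/
lemma sum_succ_indicator {n : ℕ} (j : Fin n) (f : Fin n → ℝ) :
    (∑ k : Fin n, if (k : ℕ) + 1 = (j : ℕ) then f k else 0) =
      if 1 ≤ (j : ℕ) then f ⟨(j : ℕ) - 1, lt_of_le_of_lt (Nat.sub_le _ _) j.isLt⟩ else 0 := by
  by_cases hj : 1 ≤ (j : ℕ)
  · rw [if_pos hj]
    rw [Finset.sum_eq_single (⟨(j : ℕ) - 1, lt_of_le_of_lt (Nat.sub_le _ _) j.isLt⟩ : Fin n)]
    · rw [if_pos (by simp; omega)]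
    · intro k _ hk
      rw [if_neg]
      intro h
      apply hk
      apply Fin.ext
      simp only
      omega
    · intro h; exact absurd (Finset.mem_univ _) h
  · rw [if_neg hj]
    apply Finset.sum_eq_zero
    intro k _
    rw [if_neg]; omega

/-- Collapse a sum over `k` with condition `k = j` (as Fin). -/
lemma sum_eq_indicator {n : ℕ} (j : Fin n) (f : Fin n → ℝ) :
    (∑ k : Fin n, if k = j then f k else 0) = f j := by
  simp

theorem stmt4 {n : ℕ} (α : Fin n → ℝ) (hα : ∀ i, α i ≠ 0)
    (B C : Matrix (Fin n) (Fin n) ℝ)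
    (hB : B = ∑ j, α j • Matrix.vecMulVec
        (fun i : Fin n => if (i : ℕ) ≤ (j : ℕ) then (1 : ℝ) else 0)
        (fun i : Fin n => if (i : ℕ) ≤ (j : ℕ) then (1 : ℝ) else 0))
    (hC : ∀ i j : Fin n, C i j =
      if i = j then
        (if (i : ℕ) = 0 then (α i)⁻¹
         else (α ⟨(i : ℕ) - 1, lt_of_le_of_lt (Nat.sub_le _ _) i.isLt⟩)⁻¹ + (α i)⁻¹)
      else if (i : ℕ) + 1 = (j : ℕ) then -(α i)⁻¹
      else if (j : ℕ) + 1 = (i : ℕ) then -(α j)⁻¹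
      else 0) :
    B * C = 1 ∧ C * B = 1 := by
  -- the factorization matrices
  set U : Matrix (Fin n) (Fin n) ℝ :=
    fun i j => if (i : ℕ) ≤ (j : ℕ) then 1 else 0 with hU
  set E : Matrix (Fin n) (Fin n) ℝ :=
    fun i j => (if i = j then 1 else 0) - (if (i : ℕ) + 1 = (j : ℕ) then 1 else 0) with hE
  set D : Matrix (Fin n) (Fin n) ℝ := Matrix.diagonal α with hD
  set D' : Matrix (Fin n) (Fin n) ℝ := Matrix.diagonal (fun i => (α i)⁻¹) with hD'
  -- U * E = 1
  have hUE : U * E = 1 := by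
    ext i j
    rw [Matrix.mul_apply]
    simp only [hU, hE, mul_sub]
    rw [Finset.sum_sub_distrib]
    have h1 : (∑ k : Fin n, (if (i : ℕ) ≤ (k : ℕ) then (1:ℝ) else 0) * (if k = j then 1 else 0))
        = if (i : ℕ) ≤ (j : ℕ) then 1 else 0 := by
      rw [show (∑ k : Fin n, (if (i : ℕ) ≤ (k : ℕ) then (1:ℝ) else 0) * (if k = j then 1 else 0))
        = ∑ k : Fin n, (if k = j then (if (i : ℕ) ≤ (k : ℕ) then (1:ℝ) else 0) else 0) by
          apply Finset.sum_congr rfl; intro k _; split <;> simp]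
      rw [sum_eq_indicator]
    have h2 : (∑ k : Fin n, (if (i : ℕ) ≤ (k : ℕ) then (1:ℝ) else 0) *
          (if (k : ℕ) + 1 = (j : ℕ) then 1 else 0))
        = if (i : ℕ) < (j : ℕ) then 1 else 0 := by
      rw [show (∑ k : Fin n, (if (i : ℕ) ≤ (k : ℕ) then (1:ℝ) else 0) *
          (if (k : ℕ) + 1 = (j : ℕ) then 1 else 0))
        = ∑ k : Fin n, (if (k : ℕ) + 1 = (j : ℕ) then (if (i : ℕ) ≤ (k : ℕ) then (1:ℝ) else 0) else 0) by
          apply Finset.sum_congr rfl; intro k _; split <;> simp]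
      rw [sum_succ_indicator]
      by_cases hj : 1 ≤ (j : ℕ)
      · rw [if_pos hj]
        simp only
        split <;> split <;> first | rfl | (exfalso; omega)
      · rw [if_neg hj, if_neg (by omega)]
    rw [h1, h2, Matrix.one_apply]
    by_cases hij : i = j
    · subst hij; simp
    · have hne : (i : ℕ) ≠ (j : ℕ) := fun h => hij (Fin.ext h)
      rw [if_neg hij]
      split <;> split <;> first | ring1 | omega
  have hEU : E * U = 1 := mul_eq_one_comm.mp hUE
  -- B = U * D * Uᵀ
  have hBfac : B = U * D * Uᵀ := by
    ext i k
    rw [hB, Matrix.sum_apply, Matrix.mul_apply]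
    simp only [hD, Matrix.mul_diagonal, Matrix.transpose_apply]
    simp only [hU,
      Matrix.smul_apply, Matrix.vecMulVec_apply, smul_eq_mul]
    apply Finset.sum_congr rfl
    intro j _
    ring
  -- C = Eᵀ * D' * E
  have hCfac : C = Eᵀ * D' * E := by
    ext i j
    rw [Matrix.mul_assoc, Matrix.mul_apply]
    simp only [Matrix.transpose_apply, hD', Matrix.diagonal_mul]
    simp only [hE]
    have expand : ∀ k : Fin n,
        ((if k = i then (1:ℝ) else 0) - (if (k : ℕ) + 1 = (i : ℕ) then 1 else 0)) *
          ((α k)⁻¹ * ((if k = j then 1 else 0) - (if (k : ℕ) + 1 = (j : ℕ) then 1 else 0)))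
        = (if k = i then (α k)⁻¹ * ((if k = j then 1 else 0) - (if (k:ℕ)+1 = (j:ℕ) then 1 else 0)) else 0)
          - (if (k : ℕ) + 1 = (i : ℕ) then
              (α k)⁻¹ * ((if k = j then 1 else 0) - (if (k:ℕ)+1 = (j:ℕ) then 1 else 0)) else 0) := by
      intro k
      split <;> split <;> ring
    rw [Finset.sum_congr rfl (fun k _ => expand k), Finset.sum_sub_distrib,
      sum_eq_indicator, sum_succ_indicator, hC]
    simp only [Fin.ext_iff]
    split_ifs <;>
      first
        | ring1
        | omega
        | (rw [show (⟨(i : ℕ) - 1, lt_of_le_of_lt (Nat.sub_le _ _) i.isLt⟩ : Fin n) = j from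
              Fin.ext (by simp; omega)]
           ring1)
  -- D' * D = 1
  have hDD : D' * D = 1 := by
    rw [hD', hD, Matrix.diagonal_mul_diagonal]
    rw [show (fun i => (α i)⁻¹ * α i) = fun _ => (1:ℝ) from funext fun i => inv_mul_cancel₀ (hα i)]
    exact Matrix.diagonal_one
  have hCB : C * B = 1 := by
    rw [hCfac, hBfac]
    calc Eᵀ * D' * E * (U * D * Uᵀ)
        = Eᵀ * D' * (E * U) * D * Uᵀ := by noncomm_ring
      _ = Eᵀ * D' * D * Uᵀ := by rw [hEU]; noncomm_ring
      _ = Eᵀ * (D' * D) * Uᵀ := by noncomm_ring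
      _ = Eᵀ * Uᵀ := by rw [hDD]; noncomm_ring
      _ = (U * E)ᵀ := by rw [Matrix.transpose_mul]
      _ = 1 := by rw [hUE, Matrix.transpose_one]
  exact ⟨mul_eq_one_comm.mpr hCB, hCB⟩
end

section
/- Let x* ∈ R^n, let V ∈ R^{n×k} have full column rank, let d ∈ R^n with d ∉ Range(V), set M = (V, d), and let x ∈ R^n satisfy M^T(x − x*) = γ e_{k+1} for some γ ∈ R. If s solves M^T M s = γ e_{k+1}, then the point x⁺ = x + M s satisfies ‖x⁺ − x*‖_2^2 = ‖x − x*‖_2^2 − γ · s_{k+1}, where s_{k+1} is the last component of s. -/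
open Matrix

theorem stmt8 {n k : ℕ} (xstar x : Fin n → ℝ)
    (V : Matrix (Fin n) (Fin k) ℝ) (hV : V.rank = k)
    (d : Fin n → ℝ) (hd : ∀ y, V *ᵥ y ≠ d) (γ : ℝ)
    (M : Matrix (Fin n) (Fin k ⊕ Unit) ℝ)
    (hM : M = Matrix.fromCols V (Matrix.of fun i (_ : Unit) => d i))
    (hx : Mᵀ *ᵥ (xstar - x) = γ • Sum.elim (0 : Fin k → ℝ) (fun _ => (1 : ℝ)))
    (s : Fin k ⊕ Unit → ℝ)
    (hs : (Mᵀ * M) *ᵥ s = γ • Sum.elim (0 : Fin k → ℝ) (fun _ => (1 : ℝ))) :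
    (x + M *ᵥ s - xstar) ⬝ᵥ (x + M *ᵥ s - xstar) =
      (x - xstar) ⬝ᵥ (x - xstar) - γ * s (Sum.inr ()) := by
  have he : s ⬝ᵥ (γ • Sum.elim (0 : Fin k → ℝ) (fun _ => (1 : ℝ))) = γ * s (Sum.inr ()) := by
    simp [dotProduct, Fintype.sum_sum_type, mul_comm]
  have h1 : s ⬝ᵥ (Mᵀ *ᵥ (xstar - x)) = γ * s (Sum.inr ()) := by rw [hx, he]
  have h2 : s ⬝ᵥ ((Mᵀ * M) *ᵥ s) = γ * s (Sum.inr ()) := by rw [hs, he]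
  have hw : (M *ᵥ s) ⬝ᵥ (xstar - x) = γ * s (Sum.inr ()) := by
    rw [← h1, Matrix.dotProduct_mulVec, Matrix.vecMul_transpose, dotProduct_comm]
  have hww : (M *ᵥ s) ⬝ᵥ (M *ᵥ s) = γ * s (Sum.inr ()) := by
    rw [← h2, Matrix.dotProduct_mulVec, Matrix.dotProduct_mulVec, ← Matrix.vecMul_vecMul,
      Matrix.vecMul_transpose]
  have expand : (x + M *ᵥ s - xstar) ⬝ᵥ (x + M *ᵥ s - xstar) =
      (x - xstar) ⬝ᵥ (x - xstar) - 2 * ((M *ᵥ s) ⬝ᵥ (xstar - x)) + (M *ᵥ s) ⬝ᵥ (M *ᵥ s) := by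
    simp only [dotProduct, Pi.add_apply, Pi.sub_apply, Finset.mul_sum,
      ← Finset.sum_sub_distrib, ← Finset.sum_add_distrib]
    exact Finset.sum_congr rfl fun i _ => by ring
  rw [expand, hw, hww]; ring
end

section
/- Let x* ∈ R^n and suppose x^{j}, …, x^{k+1} ∈ R^n satisfy: for every i with j ≤ i ≤ k, the point x^{i+1} is the orthogonal projection of x* onto an affine subspace containing both x^i and x^{i+1} and all earlier points x^{j},…,x^{i}. Then for any t < v in {j,…,k+1}, ⟨x^{v} − x*, x^{t} − x^{v}⟩ = 0; consequently the update directions p_t = (x^{t+1} − x^t)/δ_t (with δ_t ≠ 0) satisfy ⟨p_v, p_t⟩ = 0 for all j ≤ t < v ≤ k, i.e., the consecutive update directions within the memory window are mutually orthogonal. -/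
lemma aux_min_inner {E : Type*} [NormedAddCommGroup E] [InnerProductSpace ℝ E]
    (u v d : E) (h : ∀ t : ℝ, ‖v - u‖ ≤ ‖v + t • d - u‖) :
    inner ℝ (v - u) d = (0 : ℝ) := by
  by_contra hc
  set c : ℝ := inner ℝ (v - u) d with hcdef
  have key : ∀ t : ℝ, 0 ≤ 2 * t * c + t ^ 2 * ‖d‖ ^ 2 := by
    intro t
    have h1 : ‖v - u‖ ^ 2 ≤ ‖v + t • d - u‖ ^ 2 :=
      pow_le_pow_left₀ (norm_nonneg _) (h t) 2
    have h2 : ‖v + t • d - u‖ ^ 2 = ‖v - u‖ ^ 2 + 2 * t * c + t ^ 2 * ‖d‖ ^ 2 := by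
      have he : v + t • d - u = (v - u) + t • d := by abel
      have hn : ‖t • d‖ ^ 2 = t ^ 2 * ‖d‖ ^ 2 := by
        rw [norm_smul, mul_pow, Real.norm_eq_abs, sq_abs]
      rw [he, norm_add_sq_real, real_inner_smul_right, hn, ← hcdef]
      ring
    linarith
  have hD : (0:ℝ) < ‖d‖ ^ 2 + 1 := by positivity
  have hk := key (-c / (‖d‖ ^ 2 + 1))
  have hc2 : 0 < c ^ 2 := by positivity
  have hne : (‖d‖ ^ 2 + 1) ≠ 0 := ne_of_gt hD
  field_simp at hk
  have hpos : (0:ℝ) < (‖d‖ ^ 2 + 1) * (‖d‖ ^ 2 + 1) ^ 2 := by positivity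
  rw [zero_mul] at hk
  nlinarith [mul_pos hD hc2, mul_pos (mul_pos hD hD) hc2, sq_nonneg ‖d‖]

theorem stmt14 {n : ℕ} (xstar : EuclideanSpace ℝ (Fin n))
    (x : ℕ → EuclideanSpace ℝ (Fin n)) (j k : ℕ) (hjk : j ≤ k)
    (hproj : ∀ i, j ≤ i → i ≤ k →
      ∃ W : AffineSubspace ℝ (EuclideanSpace ℝ (Fin n)),
        (∀ t, j ≤ t → t ≤ i → x t ∈ W) ∧ x (i + 1) ∈ W ∧
        ∀ y ∈ W, ‖x (i + 1) - xstar‖ ≤ ‖y - xstar‖)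
    (p : ℕ → EuclideanSpace ℝ (Fin n)) (δ : ℕ → ℝ)
    (hδ : ∀ t, j ≤ t → t ≤ k → δ t ≠ 0)
    (hp : ∀ t, j ≤ t → t ≤ k → x (t + 1) = x t + δ t • p t) :
    (∀ t v, j ≤ t → t < v → v ≤ k + 1 →
      inner ℝ (x v - xstar) (x t - x v) = (0 : ℝ)) ∧
    (∀ t v, j ≤ t → t < v → v ≤ k →
      inner ℝ (p v) (p t) = (0 : ℝ)) := by
  -- main orthogonality, allowing t ≤ v (trivial when t = v)
  have H : ∀ t v, j ≤ t → t ≤ v → v ≤ k + 1 →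
      inner ℝ (x v - xstar) (x t - x v) = (0 : ℝ) := by
    intro t v hjt htv hvk
    rcases eq_or_lt_of_le htv with rfl | htv
    · simp
    · obtain ⟨i, rfl⟩ : ∃ i, v = i + 1 := ⟨v - 1, by omega⟩
      obtain ⟨W, hWt, hWv, hmin⟩ := hproj i (by omega) (by omega)
      have hxt : x t ∈ W := hWt t hjt (by omega)
      have := aux_min_inner xstar (x (i+1)) (x t - x (i+1)) ?_
      · exact this
      · intro s
        have hmem : s • (x t -ᵥ x (i+1)) +ᵥ x (i+1) ∈ W :=
          AffineSubspace.smul_vsub_vadd_mem W s hxt hWv hWv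
        have heq : x (i+1) + s • (x t - x (i+1)) = s • (x t -ᵥ x (i+1)) +ᵥ x (i+1) := by
          simp [vsub_eq_sub, vadd_eq_add]; abel
        rw [heq]
        exact hmin _ hmem
  refine ⟨fun t v hjt htv hvk => H t v hjt htv.le hvk, fun t v hjt htv hvk => ?_⟩
  have h1 : x (v + 1) - x v = δ v • p v := by rw [hp v (by omega) hvk]; abel
  have h2 : x (t + 1) - x t = δ t • p t := by rw [hp t hjt (by omega)]; abel
  have e1 := H t (v+1) hjt (by omega) (by omega)
  have e2 := H (t+1) (v+1) (by omega) (by omega) (by omega)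
  have e3 := H t v hjt (by omega) (by omega)
  have e4 := H (t+1) v (by omega) (by omega) (by omega)
  have key : inner ℝ (x (v+1) - x v) (x (t+1) - x t) = (0 : ℝ) := by
    have hv' : x (v+1) - x v = (x (v+1) - xstar) - (x v - xstar) := by abel
    have ht1 : x (t+1) - x t = (x (t+1) - x (v+1)) - (x t - x (v+1)) := by abel
    have ht2 : x (t+1) - x t = (x (t+1) - x v) - (x t - x v) := by abel
    rw [hv', inner_sub_left]
    have hA : inner ℝ (x (v+1) - xstar) (x (t+1) - x t) = (0 : ℝ) := by
      rw [ht1, inner_sub_right, e1, e2, sub_zero]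
    have hB : inner ℝ (x v - xstar) (x (t+1) - x t) = (0 : ℝ) := by
      rw [ht2, inner_sub_right, e3, e4, sub_zero]
    rw [hA, hB, sub_zero]
  rw [h1, h2, real_inner_smul_left, real_inner_smul_right] at key
  have := mul_ne_zero (hδ v (by omega) hvk) (hδ t hjt (by omega))
  rcases mul_eq_zero.mp key with h | h
  · exact absurd h (hδ v (by omega) hvk)
  rcases mul_eq_zero.mp h with h' | h'
  · exact absurd h' (hδ t hjt (by omega))
  · exact h'
end

section
/- Let V ∈ R^{n×k} have full column rank with Gram matrix satisfying (V^T V)^{-1} = C(β_1, …, β_k) (the tridiagonal matrix defined from nonzero reals β_i), where the columns of V are x^{j+i-1} − x^{k'} for consecutive iterates x with x^{i+1} − x^i = t_i and ‖t_i‖_2^2 = β_i. Then V (V^T V)^{-1} V^T = Σ_{i=1}^{k} t_{i}t_{i}^T / β_{i}, i.e., the orthogonal projection onto Range(V) equals the sum of rank-one projections onto the successive difference vectors t_i = x^{i+1} − x^i. -/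
open Matrix

theorem stmt15 {n k : ℕ} (z : Fin (k + 1) → (Fin n → ℝ))
    (V : Matrix (Fin n) (Fin k) ℝ)
    (hVcol : ∀ (l : Fin n) (i : Fin k), V l i = z i.castSucc l - z (Fin.last k) l)
    (hVrank : V.rank = k)
    (β : Fin k → ℝ) (hβ0 : ∀ i, β i ≠ 0)
    (hβ : ∀ i : Fin k,
      β i = (z i.succ - z i.castSucc) ⬝ᵥ (z i.succ - z i.castSucc))
    (C : Matrix (Fin k) (Fin k) ℝ)
    (hC : ∀ i j : Fin k, C i j =
      if i = j then
        (if (i : ℕ) = 0 then (β i)⁻¹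
         else (β ⟨(i : ℕ) - 1, lt_of_le_of_lt (Nat.sub_le _ _) i.isLt⟩)⁻¹ + (β i)⁻¹)
      else if (i : ℕ) + 1 = (j : ℕ) then -(β i)⁻¹
      else if (j : ℕ) + 1 = (i : ℕ) then -(β j)⁻¹
      else 0)
    (hinv : (Vᵀ * V)⁻¹ = C) :
    V * (Vᵀ * V)⁻¹ * Vᵀ =
      ∑ i : Fin k, (β i)⁻¹ •
        Matrix.vecMulVec (z i.succ - z i.castSucc) (z i.succ - z i.castSucc) := by
  classical
  set d : Matrix (Fin k) (Fin k) ℝ := Matrix.diagonal (fun i => (β i)⁻¹) with hd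
  set L : Matrix (Fin k) (Fin k) ℝ :=
    Matrix.of (fun i j => (if i = j then (1:ℝ) else 0) -
      (if (j:ℕ)+1 = (i:ℕ) then 1 else 0)) with hLdef
  set T : Matrix (Fin n) (Fin k) ℝ :=
    Matrix.of (fun l i => z i.castSucc l - z i.succ l) with hTdef
  -- C = L * d * Lᵀ
  have hCL : C = L * d * Lᵀ := by
    ext i j
    have hmul : (L * d * Lᵀ) i j = ∑ m : Fin k, L i m * (β m)⁻¹ * L j m := by
      rw [Matrix.mul_apply]
      simp only [hd, Matrix.mul_diagonal, Matrix.transpose_apply]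
    rw [hmul]
    have expand : ∀ m : Fin k, L i m * (β m)⁻¹ * L j m =
        ((if i = m then (if j = m then (β m)⁻¹ else 0) else 0)
          - (if i = m then (if (m:ℕ)+1 = (j:ℕ) then (β m)⁻¹ else 0) else 0))
        - (if j = m then (if (m:ℕ)+1 = (i:ℕ) then (β m)⁻¹ else 0) else 0)
        + (if (m:ℕ)+1 = (i:ℕ) then (if (m:ℕ)+1 = (j:ℕ) then (β m)⁻¹ else 0) else 0) := by
      intro m
      simp only [hLdef, Matrix.of_apply]
      split_ifs <;> ring
    rw [Finset.sum_congr rfl (fun m _ => expand m)]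
    rw [Finset.sum_add_distrib, Finset.sum_sub_distrib, Finset.sum_sub_distrib]
    have S1 : (∑ m : Fin k, if i = m then (if j = m then (β m)⁻¹ else 0) else 0)
        = if j = i then (β i)⁻¹ else 0 := by
      rw [Finset.sum_ite_eq]; simp
    have S2 : (∑ m : Fin k, if i = m then (if (m:ℕ)+1 = (j:ℕ) then (β m)⁻¹ else 0) else 0)
        = if (i:ℕ)+1 = (j:ℕ) then (β i)⁻¹ else 0 := by
      rw [Finset.sum_ite_eq]; simp
    have S3 : (∑ m : Fin k, if j = m then (if (m:ℕ)+1 = (i:ℕ) then (β m)⁻¹ else 0) else 0)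
        = if (j:ℕ)+1 = (i:ℕ) then (β j)⁻¹ else 0 := by
      rw [Finset.sum_ite_eq]; simp
    have S4 : (∑ m : Fin k, if (m:ℕ)+1 = (i:ℕ) then (if (m:ℕ)+1 = (j:ℕ) then (β m)⁻¹ else 0) else 0)
        = if i = j then (if h : (i:ℕ) = 0 then 0
            else (β ⟨(i:ℕ)-1, lt_of_le_of_lt (Nat.sub_le _ _) i.isLt⟩)⁻¹) else 0 := by
      by_cases hij : i = j
      · subst hij
        simp only [if_pos rfl]
        by_cases hi0 : (i:ℕ) = 0
        · rw [dif_pos hi0]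
          apply Finset.sum_eq_zero
          intro m _
          have : ¬ ((m:ℕ)+1 = (i:ℕ)) := by omega
          simp [this]
        · rw [dif_neg hi0]
          have hlt : (i:ℕ) - 1 < k := lt_of_le_of_lt (Nat.sub_le _ _) i.isLt
          have hcond : ∀ m : Fin k, ((m:ℕ)+1 = (i:ℕ)) ↔ m = ⟨(i:ℕ)-1, hlt⟩ := by
            intro m
            rw [Fin.ext_iff]
            simp
            omega
          calc (∑ m : Fin k, if (m:ℕ)+1 = (i:ℕ) then (if (m:ℕ)+1 = (i:ℕ) then (β m)⁻¹ else 0) else 0)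
              = ∑ m : Fin k, if m = ⟨(i:ℕ)-1, hlt⟩ then (β m)⁻¹ else 0 := by
                apply Finset.sum_congr rfl
                intro m _
                by_cases h : (m:ℕ)+1 = (i:ℕ)
                · rw [if_pos h, if_pos h, if_pos ((hcond m).mp h)]
                · rw [if_neg h, if_neg (fun hh => h ((hcond m).mpr hh))]
            _ = (β ⟨(i:ℕ)-1, hlt⟩)⁻¹ := by rw [Finset.sum_ite_eq']; simp
      · rw [if_neg hij]
        apply Finset.sum_eq_zero
        intro m _
        have hij' : (i:ℕ) ≠ (j:ℕ) := fun h => hij (Fin.ext h)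
        by_cases h : (m:ℕ)+1 = (i:ℕ)
        · rw [if_pos h]
          have : ¬ ((m:ℕ)+1 = (j:ℕ)) := by omega
          simp [this]
        · rw [if_neg h]
    rw [S1, S2, S3, S4, hC i j]
    by_cases hij : i = j
    · subst hij
      have h2 : ¬ ((i:ℕ)+1 = (i:ℕ)) := by omega
      by_cases hi0 : (i:ℕ) = 0 <;> simp [h2, hi0] <;> ring
    · have hij' : ¬ (j = i) := fun h => hij h.symm
      have hijn : (i:ℕ) ≠ (j:ℕ) := fun h => hij (Fin.ext h)
      by_cases h12 : (i:ℕ)+1 = (j:ℕ)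
      · have h21 : ¬ ((j:ℕ)+1 = (i:ℕ)) := by omega
        simp [hij, hij', h12, h21]
      · by_cases h21 : (j:ℕ)+1 = (i:ℕ) <;> simp [hij, hij', h12, h21]
  -- V * L = T
  have hVL : V * L = T := by
    ext l j
    have hmul : (V * L) l j = ∑ i : Fin k, V l i * L i j := by
      simp [Matrix.mul_apply]
    rw [hmul]
    have expand : ∀ i : Fin k, V l i * L i j =
        (if i = j then V l i else 0) - (if (j:ℕ)+1 = (i:ℕ) then V l i else 0) := by
      intro i
      simp only [hLdef, Matrix.of_apply]
      split_ifs <;> ring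
    rw [Finset.sum_congr rfl (fun i _ => expand i), Finset.sum_sub_distrib]
    have S1 : (∑ i : Fin k, if i = j then V l i else 0) = V l j := by
      rw [Finset.sum_ite_eq']; simp
    rw [S1]
    by_cases hjk : (j:ℕ)+1 < k
    · have hcond : ∀ i : Fin k, ((j:ℕ)+1 = (i:ℕ)) ↔ i = ⟨(j:ℕ)+1, hjk⟩ := by
        intro i; rw [Fin.ext_iff]; simp; omega
      have S2 : (∑ i : Fin k, if (j:ℕ)+1 = (i:ℕ) then V l i else 0)
          = V l ⟨(j:ℕ)+1, hjk⟩ := by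
        calc (∑ i : Fin k, if (j:ℕ)+1 = (i:ℕ) then V l i else 0)
            = ∑ i : Fin k, if i = ⟨(j:ℕ)+1, hjk⟩ then V l i else 0 := by
              apply Finset.sum_congr rfl
              intro i _
              by_cases h : (j:ℕ)+1 = (i:ℕ)
              · rw [if_pos h, if_pos ((hcond i).mp h)]
              · rw [if_neg h, if_neg (fun hh => h ((hcond i).mpr hh))]
          _ = V l ⟨(j:ℕ)+1, hjk⟩ := by rw [Finset.sum_ite_eq']; simp
      rw [S2, hVcol l j, hVcol l ⟨(j:ℕ)+1, hjk⟩]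
      have hsucc : (⟨(j:ℕ)+1, hjk⟩ : Fin k).castSucc = j.succ := by
        apply Fin.ext; simp
      rw [hTdef]
      simp only [Matrix.of_apply]
      rw [hsucc]
      ring
    · have hjk' : (j:ℕ)+1 = k := by omega
      have S2 : (∑ i : Fin k, if (j:ℕ)+1 = (i:ℕ) then V l i else 0) = 0 := by
        apply Finset.sum_eq_zero
        intro i _
        have : ¬ ((j:ℕ)+1 = (i:ℕ)) := by omega
        simp [this]
      rw [S2, hVcol l j]
      have hlast : j.succ = Fin.last k := by apply Fin.ext; simp [hjk']
      rw [hTdef]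
      simp only [Matrix.of_apply]
      rw [hlast]
      ring
  -- conclude
  rw [hinv, hCL]
  have : V * (L * d * Lᵀ) * Vᵀ = (V * L) * d * (V * L)ᵀ := by
    rw [Matrix.transpose_mul]
    simp only [Matrix.mul_assoc]
  calc V * (L * d * Lᵀ) * Vᵀ = (V * L) * d * (V * L)ᵀ := this
    _ = T * d * Tᵀ := by rw [hVL]
    _ = ∑ i : Fin k, (β i)⁻¹ •
        Matrix.vecMulVec (z i.succ - z i.castSucc) (z i.succ - z i.castSucc) := by
      ext l m
      have hlhs : (T * d * Tᵀ) l m = ∑ i : Fin k, T l i * (β i)⁻¹ * T m i := by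
        rw [Matrix.mul_apply]
        simp only [hd, Matrix.mul_diagonal, Matrix.transpose_apply]
      rw [hlhs]
      simp only [Matrix.sum_apply]
      apply Finset.sum_congr rfl
      intro i _
      simp only [Matrix.smul_apply, Matrix.vecMulVec_apply, smul_eq_mul, Pi.sub_apply,
        hTdef, Matrix.of_apply]
      ring
end
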